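/- The number of subsets H of {1,...,n}×{1,...,r} such that |H| = n and for every k with 1 ≤ k ≤ n, the intersection of H with {1,...,k}×{1,...,r} has cardinality at least k, equals (r(n+1))! / ((n+1)! · ((r-1)(n+1)+1)!), the higher Catalan number. -/

import Mathlib

open scoped Classical
open Finset
open Fin.NatCast Fin.CommRing

namespace HCaux

variable (r m : ℕ)

/-- indicator of membership of `x mod (m+1)` in `S`. -/
def chi (S : Finset (Fin (m+1))) (x : ℕ) : ℕ :=
  if ((x : Fin (m+1)) ∈ S) then 1 else 0

def cnt (S : Finset (Fin (m+1))) (x : ℕ) : ℕ :=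
  ∑ y ∈ Finset.range x, chi m S y

def G (S : Finset (Fin (m+1))) (x : ℕ) : ℤ :=
  (x : ℤ) - r * cnt m S x

def Dom (T : Finset (Fin (m+1))) : Prop :=
  ∀ p ∈ Finset.Icc 1 (m+1), r * (T.filter (fun t => t.val < p)).card < p

variable {m}

lemma chi_period (S : Finset (Fin (m+1))) (x : ℕ) : chi m S (x + (m+1)) = chi m S x := by
  unfold chi
  congr 1
  push_cast
  simp

lemma cnt_succ (S : Finset (Fin (m+1))) (x : ℕ) : cnt m S (x+1) = cnt m S x + chi m S x := by
  unfold cnt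
  rw [Finset.sum_range_succ]

lemma cnt_full (S : Finset (Fin (m+1))) : cnt m S (m+1) = S.card := by
  unfold cnt chi
  rw [← Fin.sum_univ_eq_sum_range (fun y => if ((y : Fin (m+1)) ∈ S) then 1 else 0) (m+1)]
  simp only [Fin.cast_val_eq_self]
  rw [Finset.sum_ite_mem, Finset.univ_inter]
  simp

lemma cnt_period (S : Finset (Fin (m+1))) (x : ℕ) :
    cnt m S (x + (m+1)) = cnt m S x + S.card := by
  induction x with
  | zero => simp [cnt_full]; rfl
  | succ x ih =>
      have : x + 1 + (m+1) = (x + (m+1)) + 1 := by omega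
      rw [this, cnt_succ, ih, chi_period, cnt_succ]
      ring

lemma cnt_split (S : Finset (Fin (m+1))) (a b : ℕ) :
    cnt m S (a + b) = cnt m S a + ∑ y ∈ Finset.range b, chi m S (a + y) := by
  induction b with
  | zero => simp
  | succ b ih =>
      rw [← add_assoc, cnt_succ, ih, Finset.sum_range_succ]
      ring

variable {r}

lemma G_period (S : Finset (Fin (m+1))) (h : m = r * S.card) (x : ℕ) :
    G r m S (x + (m+1)) = G r m S x + 1 := by
  unfold G
  rw [cnt_period]
  have hc : (r : ℤ) * (S.card : ℤ) = (m : ℤ) := by exact_mod_cast h.symm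
  push_cast
  linarith [hc]

/-- key counting lemma: cardinality of a prefix of the shifted set. -/
lemma count_shift (S : Finset (Fin (m+1))) (s : Fin (m+1)) (p : ℕ) (hp : p ≤ m+1) :
    ((S.image (· - s)).filter (fun t => t.val < p)).card
      = ∑ y ∈ Finset.range p, chi m S (s.val + y) := by
  rw [Finset.filter_image, Finset.card_image_of_injective _ sub_left_injective]
  have h1 : ∑ y ∈ Finset.range p, chi m S (s.val + y)
      = ((Finset.range p).filter (fun y => (((s.val + y : ℕ) : Fin (m+1))) ∈ S)).card := by
    rw [Finset.card_filter]
    exact Finset.sum_congr rfl (fun y _ => rfl)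
  rw [h1]
  apply Finset.card_bij (i := fun a _ => (a - s).val)
  · intro a ha
    rw [Finset.mem_filter] at ha ⊢
    refine ⟨Finset.mem_range.mpr ha.2, ?_⟩
    have : ((s.val + (a - s).val : ℕ) : Fin (m+1)) = a := by
      push_cast [Fin.cast_val_eq_self]
      exact add_sub_cancel s a
    rw [this]; exact ha.1
  · intro a ha b hb hab
    have : a - s = b - s := Fin.val_injective hab
    exact sub_left_injective this
  · intro y hy
    rw [Finset.mem_filter, Finset.mem_range] at hy
    have hcast : ((s.val + y : ℕ) : Fin (m+1)) = s + (y : Fin (m+1)) := by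
      push_cast [Fin.cast_val_eq_self]; ring
    have hyval : ((y : Fin (m+1))).val = y := Fin.val_cast_of_lt (lt_of_lt_of_le hy.1 hp)
    refine ⟨s + (y : Fin (m+1)), Finset.mem_filter.mpr ⟨?_, ?_⟩, ?_⟩
    · rw [← hcast]; exact hy.2
    · rw [add_sub_cancel_left, hyval]; exact hy.1
    · rw [add_sub_cancel_left, hyval]

lemma dom_iff_G (S : Finset (Fin (m+1))) (s : Fin (m+1)) :
    Dom r m (S.image (· - s)) ↔
      ∀ p ∈ Finset.Icc 1 (m+1), G r m S s.val < G r m S (s.val + p) := by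
  unfold Dom
  apply forall₂_congr
  intro p hp
  have hp' : p ≤ m + 1 := (Finset.mem_Icc.mp hp).2
  rw [count_shift S s p hp']
  have hsplit := cnt_split S s.val p
  have hG : G r m S (s.val + p)
      = G r m S s.val + (p : ℤ) - (r * ∑ y ∈ Finset.range p, chi m S (s.val + y) : ℕ) := by
    unfold G
    rw [hsplit]
    push_cast
    ring
  rw [hG]
  omega


/-- The cycle lemma: exactly one rotation of `S` is dominant. -/
lemma cycle (S : Finset (Fin (m+1))) (h : m = r * S.card) :
    ∃! s : Fin (m+1), Dom r m (S.image (· - s)) := by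
  -- work with the ℕ-level condition
  set g : ℕ → ℤ := G r m S with hg
  have hper : ∀ x : ℕ, g (x + (m+1)) = g x + 1 := G_period S h
  -- the set of minimizers
  have hne : ((Finset.range (m+1)).image g).Nonempty := by
    simp [Finset.Nonempty, Finset.mem_image]
    exact ⟨0, Nat.zero_le m⟩
  set mv := ((Finset.range (m+1)).image g).min' hne with hmv
  have hAne : ((Finset.range (m+1)).filter (fun x => g x = mv)).Nonempty := by
    obtain ⟨x, hx, hxe⟩ := Finset.mem_image.mp (Finset.min'_mem _ hne)
    exact ⟨x, Finset.mem_filter.mpr ⟨hx, hxe⟩⟩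
  set s0 := ((Finset.range (m+1)).filter (fun x => g x = mv)).max' hAne with hs0
  have hs0mem := Finset.max'_mem _ hAne
  rw [← hs0] at hs0mem
  rw [Finset.mem_filter, Finset.mem_range] at hs0mem
  have hmin : ∀ x, x < m+1 → mv ≤ g x := by
    intro x hx
    exact Finset.min'_le _ _ (Finset.mem_image.mpr ⟨x, Finset.mem_range.mpr hx, rfl⟩)
  have hmax : ∀ x, x < m+1 → g x = mv → x ≤ s0 := by
    intro x hx hxe
    exact Finset.le_max' _ _ (Finset.mem_filter.mpr ⟨Finset.mem_range.mpr hx, hxe⟩)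
  -- validity of a shift
  have key : ∀ x : ℕ, x < m+1 →
      ((∀ p ∈ Finset.Icc 1 (m+1), g x < g (x + p)) ↔ x = s0) := by
    intro x hx
    constructor
    · intro hval
      by_contra hne'
      rcases lt_or_gt_of_ne hne' with hlt | hgt
      · -- x < s0 : validity of x at p = s0 - x gives g s0 > g x; but g s0 = mv ≤ g x
        have h1 := hval (s0 - x) (Finset.mem_Icc.mpr ⟨by omega, by omega⟩)
        rw [show x + (s0 - x) = s0 by omega] at h1
        have := hmin x hx
        omega
      · -- x > s0 : validity of x at p = s0 + (m+1) - x
        have h1 := hval (s0 + (m+1) - x) (Finset.mem_Icc.mpr ⟨by omega, by omega⟩)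
        rw [show x + (s0 + (m+1) - x) = s0 + (m+1) by omega, hper s0] at h1
        -- g x < g s0 + 1 = mv + 1, so g x ≤ mv, so g x = mv, so x ≤ s0: contradiction
        have h2 := hmin x hx
        have h3 : g x = mv := by omega
        have := hmax x hx h3
        omega
    · rintro rfl
      intro p hp
      rw [Finset.mem_Icc] at hp
      rw [hs0mem.2]
      by_cases hc : s0 + p < m+1
      · have h1 := hmin (s0 + p) hc
        rcases lt_or_eq_of_le h1 with h2 | h2
        · omega
        · exfalso
          have := hmax (s0 + p) hc h2.symm
          omega
      · have hxe : s0 + p = (s0 + p - (m+1)) + (m+1) := by omega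
        rw [hxe, hper]
        have h1 := hmin (s0 + p - (m+1)) (by omega)
        omega
  refine ⟨⟨s0, hs0mem.1⟩, ?_, ?_⟩
  · show Dom r m (S.image (· - (⟨s0, hs0mem.1⟩ : Fin (m+1))))
    rw [dom_iff_G]
    exact (key s0 hs0mem.1).mpr rfl
  · intro s hs
    rw [dom_iff_G] at hs
    have := (key s.val s.isLt).mp hs
    exact Fin.ext this


/-- Double counting: the number of dominant sets of size `n+1` times `m+1`
equals the number of all sets of size `n+1`. -/
lemma card_dom_mul (n : ℕ) (h : m = r * (n+1)) :
    ((Finset.univ.filter (fun T : Finset (Fin (m+1)) =>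
        T.card = n+1 ∧ Dom r m T)).card) * (m+1) = (m+1).choose (n+1) := by
  set P : Finset (Fin (m+1) × Finset (Fin (m+1))) :=
    Finset.univ.filter (fun z => z.2.card = n+1 ∧ Dom r m (z.2.image (· - z.1))) with hP
  -- count P fiberwise over the first coordinate
  have count1 : P.card = ((Finset.univ.filter (fun T : Finset (Fin (m+1)) =>
      T.card = n+1 ∧ Dom r m T)).card) * (m+1) := by
    have hfib1 : ∀ s : Fin (m+1), (P.filter (fun z => z.1 = s)).card
        = (Finset.univ.filter (fun T : Finset (Fin (m+1)) =>
            T.card = n+1 ∧ Dom r m T)).card := by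
      intro s
      apply Finset.card_nbij' (i := fun z => z.2.image (· - s))
        (j := fun T => (s, T.image (· + s)))
      · intro z hz
        rw [Finset.mem_coe, Finset.mem_filter] at hz
        obtain ⟨hzP, hzs⟩ := hz
        rw [hP, Finset.mem_filter] at hzP
        rw [Finset.mem_coe, Finset.mem_filter]
        refine ⟨Finset.mem_univ _, ?_, ?_⟩
        · rw [Finset.card_image_of_injective _ sub_left_injective]
          exact hzP.2.1
        · rw [← hzs]
          exact hzP.2.2
      · intro T hT
        rw [Finset.mem_coe, Finset.mem_filter] at hT
        rw [Finset.mem_coe, Finset.mem_filter, hP, Finset.mem_filter]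
        refine ⟨⟨Finset.mem_univ _, ?_, ?_⟩, rfl⟩
        · rw [Finset.card_image_of_injective _ (add_left_injective s)]
          exact hT.2.1
        · rw [Finset.image_image]
          have : ((fun x => x - s) ∘ (fun x => x + s)) = id := by
            funext x; simp
          rw [this, Finset.image_id]
          exact hT.2.2
      · intro z hz
        rw [Finset.mem_coe, Finset.mem_filter] at hz
        simp only
        rw [Finset.image_image]
        have : ((fun x => x + s) ∘ (fun x => x - s)) = id := by
          funext x; simp
        rw [this, Finset.image_id]
        exact Prod.ext hz.2.symm rfl
      · intro T hT
        simp only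
        rw [Finset.image_image]
        have : ((fun x => x - s) ∘ (fun x => x + s)) = id := by
          funext x; simp
        rw [this, Finset.image_id]
    rw [Finset.card_eq_sum_card_fiberwise (f := Prod.fst) (t := Finset.univ)
      (fun x _ => Finset.mem_univ _)]
    rw [Finset.sum_congr rfl (fun s _ => hfib1 s), Finset.sum_const, Finset.card_univ,
      Fintype.card_fin, smul_eq_mul, mul_comm]
  -- count P fiberwise over the second coordinate
  have count2 : P.card = (m+1).choose (n+1) := by
    rw [Finset.card_eq_sum_card_fiberwise (f := Prod.snd) (t := Finset.univ)
      (fun x _ => Finset.mem_univ _)]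
    have hfib : ∀ S : Finset (Fin (m+1)),
        (P.filter (fun z => z.2 = S)).card = if S.card = n+1 then 1 else 0 := by
      intro S
      by_cases hc : S.card = n+1
      · rw [if_pos hc]
        obtain ⟨s₀, hs₀, huniq⟩ := cycle S (by rw [hc]; exact h)
        rw [Finset.card_eq_one]
        refine ⟨(s₀, S), ?_⟩
        ext z
        rw [Finset.mem_filter, hP, Finset.mem_filter, Finset.mem_singleton]
        constructor
        · rintro ⟨⟨-, hz1, hz2⟩, hz3⟩
          rw [hz3] at hz2
          have := huniq z.1 hz2
          exact Prod.ext this hz3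
        · rintro rfl
          exact ⟨⟨Finset.mem_univ _, hc, hs₀⟩, rfl⟩
      · rw [if_neg hc, Finset.card_eq_zero]
        rw [Finset.filter_eq_empty_iff]
        rintro z hz rfl
        rw [hP, Finset.mem_filter] at hz
        exact hc hz.2.1
    rw [Finset.sum_congr rfl (fun S _ => hfib S)]
    rw [← Finset.card_filter]
    rw [show (Finset.univ.filter (fun S : Finset (Fin (m+1)) => S.card = n+1))
        = Finset.univ.powersetCard (n+1) by
      rw [Finset.powersetCard_eq_filter, Finset.powerset_univ]]
    rw [Finset.card_powersetCard, Finset.card_univ, Fintype.card_fin]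
  rw [← count1, count2]


lemma dom_iff_j (n : ℕ) (hr : 1 ≤ r) (h : m = r * (n+1)) (T : Finset (Fin (m+1)))
    (hT : T.card = n+1) :
    Dom r m T ↔ ∀ j ∈ Finset.Icc 1 (n+1), (T.filter (fun t => t.val < j*r)).card < j := by
  constructor
  · intro hD j hj
    rw [Finset.mem_Icc] at hj
    have hjr : j * r ∈ Finset.Icc 1 (m+1) := by
      rw [Finset.mem_Icc]
      constructor
      · have := Nat.mul_le_mul hj.1 hr
        simpa using this
      · have h1 : j * r ≤ (n+1) * r := Nat.mul_le_mul_right r hj.2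
        have h2 : (n+1) * r = r * (n+1) := mul_comm _ _
        omega
    have := hD (j*r) hjr
    have hr0 : 0 < r := hr
    calc (T.filter (fun t => t.val < j*r)).card
        = r * (T.filter (fun t => t.val < j*r)).card / r := by
          rw [Nat.mul_div_cancel_left _ hr0]
      _ < j := by
          rw [Nat.div_lt_iff_lt_mul hr0, mul_comm j r] at *
          exact this
  · intro hj p hp
    rw [Finset.mem_Icc] at hp
    set c := (T.filter (fun t => t.val < p)).card with hc
    by_cases hc0 : c = 0
    · rw [hc0]; omega
    · have hcle : c ≤ n + 1 := by
        rw [hc, ← hT]; exact Finset.card_filter_le _ _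
      have hcond := hj c (Finset.mem_Icc.mpr ⟨by omega, hcle⟩)
      by_contra hcon
      push_neg at hcon
      -- p ≤ r * c, so filter (val < p) ⊆ filter (val < c * r)
      have hsub : T.filter (fun t => t.val < p) ⊆ T.filter (fun t => t.val < c*r) := by
        intro t ht
        rw [Finset.mem_filter] at ht ⊢
        refine ⟨ht.1, ?_⟩
        have h3 : r * c = c * r := mul_comm _ _
        omega
      have := Finset.card_le_card hsub
      omega


/-! ### The encoding of grid cells into `Fin (r*(n+1)+1)` -/

def enc (n r : ℕ) (p : Fin n × Fin r) : Fin (r*(n+1)+1) :=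
  ⟨r*(n+1) - 1 - (p.1.val * r + p.2.val), by omega⟩

lemma q_lt (n r : ℕ) (p : Fin n × Fin r) :
    p.1.val * r + p.2.val + r < r * (n+1) := by
  have h1 : (p.1.val + 1) * r ≤ n * r := Nat.mul_le_mul_right r p.1.isLt
  have h2 : (p.1.val + 1) * r = p.1.val * r + r := by ring
  have h3 : r * (n+1) = n * r + r := by ring
  have := p.2.isLt
  omega

lemma enc_lt_iff (n r : ℕ) (p : Fin n × Fin r) (k : ℕ) :
    p.1.val * r + p.2.val < r * k ↔ p.1.val < k := by
  constructor
  · intro hlt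
    by_contra hk
    push_neg at hk
    have h1 : r * k ≤ r * p.1.val := Nat.mul_le_mul_left r hk
    have h2 : r * p.1.val = p.1.val * r := mul_comm _ _
    omega
  · intro hlt
    have h1 : (p.1.val + 1) * r ≤ k * r := Nat.mul_le_mul_right r hlt
    have h2 : (p.1.val + 1) * r = p.1.val * r + r := by ring
    have h3 : k * r = r * k := mul_comm _ _
    have := p.2.isLt
    omega

lemma enc_inj (n r : ℕ) : Function.Injective (enc n r) := by
  intro p q hpq
  have h1 : (enc n r p).val = (enc n r q).val := congrArg Fin.val hpq
  have hp := q_lt n r p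
  have hq := q_lt n r q
  have h2 : p.1.val * r + p.2.val = q.1.val * r + q.2.val := by
    unfold enc at h1; simp only at h1; omega
  have key : ∀ z : Fin n × Fin r,
      (z.1.val * r + z.2.val) / r = z.1.val ∧ (z.1.val * r + z.2.val) % r = z.2.val := by
    intro z
    have hz2 := z.2.isLt
    have hr0 : 0 < r := lt_of_le_of_lt (Nat.zero_le _) hz2
    rw [mul_comm z.1.val r, Nat.mul_add_div hr0, Nat.mul_add_mod]
    rw [Nat.div_eq_of_lt hz2, Nat.mod_eq_of_lt hz2]
    simp
  have k1 := key p; have k2 := key q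
  have e1 : p.1.val = q.1.val := by rw [← k1.1, ← k2.1, h2]
  have e2 : p.2.val = q.2.val := by rw [← k1.2, ← k2.2, h2]
  exact Prod.ext (Fin.ext e1) (Fin.ext e2)

lemma enc_val (n r : ℕ) (p : Fin n × Fin r) :
    (enc n r p).val = r*(n+1) - 1 - (p.1.val * r + p.2.val) := rfl

lemma enc_val_lb (n r : ℕ) (p : Fin n × Fin r) : r ≤ (enc n r p).val := by
  have := q_lt n r p
  rw [enc_val]
  omega

lemma enc_val_ub (n r : ℕ) (p : Fin n × Fin r) : (enc n r p).val < r*(n+1) := by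
  have := q_lt n r p
  have hr0 : 0 < r := lt_of_le_of_lt (Nat.zero_le _) p.2.isLt
  rw [enc_val]
  omega

lemma enc_surj (n r : ℕ) (x : Fin (r*(n+1)+1)) (h1 : r ≤ x.val) (h2 : x.val < r*(n+1)) :
    ∃ p : Fin n × Fin r, enc n r p = x := by
  have hr0 : 0 < r := by
    rcases Nat.eq_zero_or_pos r with hrr | hrr
    · subst hrr; simp at h2
    · exact hrr
  set q := r*(n+1) - 1 - x.val with hq
  have hqn : q < n * r := by
    have h3 : r * (n+1) = n * r + r := by ring
    omega
  refine ⟨(⟨q / r, ?_⟩, ⟨q % r, Nat.mod_lt _ hr0⟩), ?_⟩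
  · rw [Nat.div_lt_iff_lt_mul hr0]; exact hqn
  · apply Fin.ext
    show r*(n+1) - 1 - (q / r * r + q % r) = x.val
    have h4 : q / r * r + q % r = q := by
      rw [mul_comm]; exact Nat.div_add_mod q r
    rw [h4, hq]
    omega

lemma top_not_mem (n r : ℕ) (H : Finset (Fin n × Fin r)) :
    Fin.last (r*(n+1)) ∉ H.image (enc n r) := by
  rw [Finset.mem_image]
  rintro ⟨p, -, hp⟩
  have h1 := congrArg Fin.val hp
  rw [enc_val, Fin.val_last] at h1
  have := enc_val_ub n r p
  rw [enc_val] at this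
  omega

lemma insert_filter_card (n r : ℕ) (H : Finset (Fin n × Fin r)) (hH : H.card = n)
    (j : ℕ) (hj2 : j ≤ n+1) :
    ((insert (Fin.last (r*(n+1))) (H.image (enc n r))).filter
        (fun t => t.val < j*r)).card
      = n - (H.filter (fun p => p.1.val + 1 ≤ n+1-j)).card := by
  rw [Finset.filter_insert, if_neg (by
    simp only [Fin.val_last]
    have h1 : j * r ≤ (n+1) * r := Nat.mul_le_mul_right r hj2
    have h2 : (n+1)*r = r*(n+1) := mul_comm _ _
    omega)]
  rw [Finset.filter_image, Finset.card_image_of_injective _ (enc_inj n r)]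
  have hpred : ∀ p : Fin n × Fin r,
      ((enc n r p).val < j*r) ↔ ¬ (p.1.val + 1 ≤ n+1-j) := by
    intro p
    have hq := q_lt n r p
    have hk : r * (n+1-j) + r * j = r * (n+1) := by
      rw [← Nat.mul_add]; congr 1; omega
    have hjr : r * j = j * r := mul_comm _ _
    have hlt := enc_lt_iff n r p (n+1-j)
    rw [enc_val]
    constructor
    · intro h hcon
      have h5 : p.1.val < n+1-j := by omega
      have := hlt.mpr h5
      omega
    · intro h
      have h6 : ¬ (p.1.val * r + p.2.val < r * (n+1-j)) := by
        intro hc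
        exact h (by have := hlt.mp hc; omega)
      omega
  rw [Finset.filter_congr (fun p _ => by rw [hpred p])]
  have hsum := Finset.card_filter_add_card_filter_not
      (s := H) (p := fun p : Fin n × Fin r => p.1.val + 1 ≤ n+1-j)
  omega


lemma AB_card (n r : ℕ) (hn : 1 ≤ n) (hr : 1 ≤ r) :
    (Finset.univ.filter (fun H : Finset (Fin n × Fin r) =>
        H.card = n ∧ ∀ k ∈ Finset.Icc 1 n,
          k ≤ (H.filter (fun p : Fin n × Fin r => p.1.val + 1 ≤ k)).card)).card
    = (Finset.univ.filter (fun T : Finset (Fin (r*(n+1)+1)) =>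
        T.card = n+1 ∧ Dom r (r*(n+1)) T)).card := by
  apply Finset.card_bij (i := fun H _ => insert (Fin.last (r*(n+1))) (H.image (enc n r)))
  · intro H hH
    simp only [Finset.mem_filter] at hH
    obtain ⟨-, hcard, hcond⟩ := hH
    have hcard' : (insert (Fin.last (r*(n+1))) (H.image (enc n r))).card = n+1 := by
      rw [Finset.card_insert_of_notMem (top_not_mem n r H),
        Finset.card_image_of_injective _ (enc_inj n r), hcard]
    simp only [Finset.mem_filter]
    refine ⟨Finset.mem_univ _, hcard', ?_⟩
    rw [dom_iff_j n hr rfl _ hcard']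
    intro j hj
    rw [Finset.mem_Icc] at hj
    rw [insert_filter_card n r H hcard j hj.2]
    have ha : (H.filter (fun p => p.1.val + 1 ≤ n+1-j)).card ≤ n :=
      le_trans (Finset.card_filter_le _ _) (le_of_eq hcard)
    by_cases hjn : j = n+1
    · omega
    · have hk : n+1-j ∈ Finset.Icc 1 n := Finset.mem_Icc.mpr ⟨by omega, by omega⟩
      have := hcond (n+1-j) hk
      omega
  · intro H1 h1 H2 h2 heq
    have e1 := congrArg (fun s => Finset.erase s (Fin.last (r*(n+1)))) heq
    simp only [Finset.erase_insert (top_not_mem n r H1),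
      Finset.erase_insert (top_not_mem n r H2)] at e1
    exact Finset.image_injective (enc_inj n r) e1
  · intro T hT
    simp only [Finset.mem_filter] at hT
    obtain ⟨-, hTcard, hTdom⟩ := hT
    have hj := (dom_iff_j n hr rfl T hTcard).mp hTdom
    have htop : Fin.last (r*(n+1)) ∈ T := by
      have h1 := hj (n+1) (Finset.mem_Icc.mpr ⟨by omega, le_refl _⟩)
      have hsum := Finset.card_filter_add_card_filter_not
        (s := T) (p := fun t : Fin (r*(n+1)+1) => t.val < (n+1)*r)
      have hpos : 0 < (T.filter (fun t : Fin (r*(n+1)+1) => ¬ t.val < (n+1)*r)).card := by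
        omega
      obtain ⟨t, ht⟩ := Finset.card_pos.mp hpos
      simp only [Finset.mem_filter] at ht
      have h2 : t = Fin.last (r*(n+1)) := by
        apply Fin.ext
        rw [Fin.val_last]
        have h3 : (n+1)*r = r*(n+1) := mul_comm _ _
        have := t.isLt
        have := ht.2
        omega
      rw [← h2]; exact ht.1
    have hlow : ∀ t ∈ T, r ≤ t.val := by
      intro t ht
      have h1 := hj 1 (Finset.mem_Icc.mpr ⟨le_refl _, by omega⟩)
      have h2 : (T.filter (fun t : Fin (r*(n+1)+1) => t.val < 1*r)).card = 0 := by omega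
      rw [Finset.card_eq_zero, Finset.filter_eq_empty_iff] at h2
      have := h2 ht
      omega
    set H := Finset.univ.filter (fun p : Fin n × Fin r => enc n r p ∈ T) with hHd
    have hfH : insert (Fin.last (r*(n+1))) (H.image (enc n r)) = T := by
      ext x
      rw [Finset.mem_insert, Finset.mem_image]
      constructor
      · rintro (rfl | ⟨p, hp, rfl⟩)
        · exact htop
        · rw [hHd, Finset.mem_filter] at hp; exact hp.2
      · intro hx
        by_cases hxt : x = Fin.last (r*(n+1))
        · left; exact hxt
        · right
          have hx1 : r ≤ x.val := hlow x hx
          have hx2 : x.val < r*(n+1) := by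
            have := x.isLt
            have hne : x.val ≠ r*(n+1) := fun hc =>
              hxt (Fin.ext (by rw [Fin.val_last]; exact hc))
            omega
          obtain ⟨p, hp⟩ := enc_surj n r x hx1 hx2
          refine ⟨p, ?_, hp⟩
          rw [hHd, Finset.mem_filter]
          exact ⟨Finset.mem_univ _, by rw [hp]; exact hx⟩
    have hHcard : H.card = n := by
      have h1 : H.image (enc n r) = T.erase (Fin.last (r*(n+1))) := by
        rw [← hfH, Finset.erase_insert (top_not_mem n r H)]
      have h2 : (H.image (enc n r)).card = H.card :=
        Finset.card_image_of_injective _ (enc_inj n r)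
      rw [h1, Finset.card_erase_of_mem htop, hTcard] at h2
      omega
    refine ⟨H, ?_, hfH⟩
    simp only [Finset.mem_filter]
    refine ⟨Finset.mem_univ _, hHcard, ?_⟩
    intro k hk
    rw [Finset.mem_Icc] at hk
    have hjk : n+1-k ∈ Finset.Icc 1 (n+1) := Finset.mem_Icc.mpr ⟨by omega, by omega⟩
    have h1 := hj (n+1-k) hjk
    rw [← hfH, insert_filter_card n r H hHcard (n+1-k) (by omega)] at h1
    have hkk : n+1-(n+1-k) = k := by omega
    rw [hkk] at h1
    have ha : (H.filter (fun p => p.1.val + 1 ≤ k)).card ≤ n :=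
      le_trans (Finset.card_filter_le _ _) (le_of_eq hHcard)
    omega

end HCaux

/-- The number of subsets `H` of `{1,...,n} × {1,...,r}` (encoded as `Fin n × Fin r`,
with the first coordinate `i` representing `i+1`) with `|H| = n` and
`|H ∩ ({1,...,k} × {1,...,r})| ≥ k` for every `1 ≤ k ≤ n`, equals the higher Catalan
number `(r(n+1))! / ((n+1)! · ((r-1)(n+1)+1)!)`. -/
theorem higher_catalan_count (n r : ℕ) (hn : 1 ≤ n) (hr : 1 ≤ r) :
    (Finset.univ.filter (fun H : Finset (Fin n × Fin r) =>
        H.card = n ∧ ∀ k ∈ Finset.Icc 1 n,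
          k ≤ (H.filter (fun p : Fin n × Fin r => p.1.val + 1 ≤ k)).card)).card
      = (r * (n + 1)).factorial
          / ((n + 1).factorial * ((r - 1) * (n + 1) + 1).factorial) := by
  have hAB := HCaux.AB_card n r hn hr
  have hMul := HCaux.card_dom_mul (r := r) (m := r*(n+1)) n rfl
  set C := (Finset.univ.filter (fun T : Finset (Fin (r*(n+1)+1)) =>
      T.card = n+1 ∧ HCaux.Dom r (r*(n+1)) T)).card with hC
  rw [hAB]
  have hh : n + 1 ≤ r*(n+1)+1 := by
    have h0 : 1*(n+1) ≤ r*(n+1) := Nat.mul_le_mul_right _ hr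
    omega
  have hfact := Nat.choose_mul_factorial_mul_factorial hh
  have hM : r*(n+1)+1 - (n+1) = (r-1)*(n+1)+1 := by
    have h1 : (r-1)*(n+1) + 1*(n+1) = r*(n+1) := by
      rw [← Nat.add_mul]; congr 1; omega
    omega
  rw [hM] at hfact
  have hNfact : (r*(n+1)+1).factorial = (r*(n+1)+1) * (r*(n+1)).factorial :=
    Nat.factorial_succ _
  have hkey : C * ((n+1).factorial * ((r-1)*(n+1)+1).factorial)
      = (r*(n+1)).factorial := by
    have hpos : 0 < r*(n+1)+1 := Nat.succ_pos _
    apply Nat.eq_of_mul_eq_mul_left hpos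
    calc (r*(n+1)+1) * (C * ((n+1).factorial * ((r-1)*(n+1)+1).factorial))
        = (C * (r*(n+1)+1)) * (n+1).factorial * ((r-1)*(n+1)+1).factorial := by ring
      _ = (r*(n+1)+1).choose (n+1) * (n+1).factorial * ((r-1)*(n+1)+1).factorial := by
          rw [hMul]
      _ = (r*(n+1)+1).factorial := hfact
      _ = (r*(n+1)+1) * (r*(n+1)).factorial := hNfact
  symm
  apply Nat.div_eq_of_eq_mul_left
  · exact Nat.mul_pos (Nat.factorial_pos _) (Nat.factorial_pos _)
  · exact hkey.symm
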